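/- arXiv:1102.0523 — 3 statements merged into one kernel-verified Lean document; each statement's English description precedes it below -/
import Mathlib

section
/- Let f : X → Y be a soft map of compact Hausdorff spaces, Z = f⁻¹(T) for a closed T ⊆ Y, and r : Y → T a continuous retraction. Then there exists a continuous retraction s : X → Z such that f ∘ s = r ∘ f. -/
/-- A continuous map `f : X → Y` is *soft* if for every compact Hausdorff space `B`, closed
subset `A ⊆ B`, and continuous maps `g : A → X`, `h : B → Y` with `f ∘ g = h|A`, there exists
a continuous `k : B → X` extending `g` with `f ∘ k = h`. -/
def IsSoft {X Y : Type} [TopologicalSpace X] [TopologicalSpace Y] (f : C(X, Y)) : Prop :=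
  ∀ (B : Type) [TopologicalSpace B] [CompactSpace B] [T2Space B] (A : Set B), IsClosed A →
    ∀ (g : C(A, X)) (h : C(B, Y)), (∀ a : A, f (g a) = h a) →
      ∃ k : C(B, X), (∀ a : A, k a = g a) ∧ ∀ b, f (k b) = h b

/-- If `f : X → Y` is soft, `Z = f⁻¹(T)` for a closed `T ⊆ Y`, and `r : Y → T` is a continuous
retraction, then there is a continuous retraction `s : X → Z` with `f ∘ s = r ∘ f`. -/
theorem isSoft_exists_compatible_retraction {X Y : Type}
    [TopologicalSpace X] [CompactSpace X] [T2Space X]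
    [TopologicalSpace Y] [CompactSpace Y] [T2Space Y]
    (f : C(X, Y)) (hf : IsSoft f) (T : Set Y) (hT : IsClosed T)
    (r : C(Y, ↥T)) (hr : ∀ t : ↥T, r (t : Y) = t) :
    ∃ s : C(X, ↥(⇑f ⁻¹' T)), (∀ z : ↥(⇑f ⁻¹' T), s (z : X) = z) ∧
      ∀ x, f ((s x : X)) = ((r (f x)) : Y) := by
  set A : Set X := ⇑f ⁻¹' T with hA
  have hAcl : IsClosed A := hT.preimage f.continuous
  let g : C(A, X) := ⟨Subtype.val, continuous_subtype_val⟩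
  let h : C(X, Y) := ⟨fun x => (r (f x) : Y), by continuity⟩
  obtain ⟨k, hk1, hk2⟩ := hf X A hAcl g h (fun a => by
    simp only [g, h, ContinuousMap.coe_mk]
    rw [hr ⟨f a.1, a.2⟩])
  have hmem : ∀ x, k x ∈ A := fun x => by
    show f (k x) ∈ T
    rw [hk2 x]; exact (r (f x)).2
  refine ⟨⟨fun x => ⟨k x, hmem x⟩, by continuity⟩, fun z => Subtype.ext (hk1 z), fun x => hk2 x⟩
end

section
/- If f : X → Y is a map of compact Hausdorff spaces such that C(f) : C(Y) → C(X) is doubly projective in the category of commutative unital C*-algebras, then f is a soft map. -/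
/-- Doubly projective unital `*`-homomorphism in the category of *commutative* unital
C*-algebras. -/
def DoublyProjectiveComm {X Y : Type} [CommCStarAlgebra X] [CommCStarAlgebra Y]
    (i : X →⋆ₐ[ℂ] Y) : Prop :=
  ∀ (A B : Type) [CommCStarAlgebra A] [CommCStarAlgebra B]
    (f : X →⋆ₐ[ℂ] A) (g : Y →⋆ₐ[ℂ] B) (p : A →⋆ₐ[ℂ] B),
    Function.Surjective p → g.comp i = p.comp f →
      ∃ h : Y →⋆ₐ[ℂ] A, h.comp i = f ∧ p.comp h = g

/-- If `C(f) : C(Y) → C(X)` is doubly projective in the category of commutative unital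
C*-algebras, then `f` is soft. -/
theorem isSoft_of_doublyProjectiveComm {X Y : Type}
    [TopologicalSpace X] [CompactSpace X] [T2Space X]
    [TopologicalSpace Y] [CompactSpace Y] [T2Space Y]
    (f : C(X, Y)) (hf : DoublyProjectiveComm (ContinuousMap.compStarAlgHom' ℂ ℂ f)) :
    IsSoft f := by
  intro B _ _ _ A hA g h hgh
  haveI : CompactSpace A := isCompact_iff_compactSpace.mp hA.isCompact
  -- the inclusion map A → B and the restriction *-homomorphism it induces
  set ι : C(A, B) := ⟨Subtype.val, continuous_subtype_val⟩ with hι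
  set p : C(B, ℂ) →⋆ₐ[ℂ] C(A, ℂ) := ContinuousMap.compStarAlgHom' ℂ ℂ ι with hp
  have hpsurj : Function.Surjective p := by
    intro φ
    obtain ⟨ψ, hψ⟩ := φ.exists_restrict_eq hA
    exact ⟨ψ, by ext a; exact congrFun (congrArg DFunLike.coe hψ) a⟩
  have hsq : (ContinuousMap.compStarAlgHom' ℂ ℂ g).comp (ContinuousMap.compStarAlgHom' ℂ ℂ f)
      = p.comp (ContinuousMap.compStarAlgHom' ℂ ℂ h) := by
    ext φ a
    simp [hp, hι, hgh a]
  obtain ⟨ψ, hψ1, hψ2⟩ := hf (C(B, ℂ)) (C(A, ℂ))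
    (ContinuousMap.compStarAlgHom' ℂ ℂ h) (ContinuousMap.compStarAlgHom' ℂ ℂ g) p hpsurj hsq
  -- build `k : C(B, X)` from `ψ` via Gelfand duality
  set k : C(B, X) := (((WeakDual.CharacterSpace.homeoEval X ℂ).symm : C(WeakDual.characterSpace ℂ C(X, ℂ), X)).comp
      ((WeakDual.CharacterSpace.compContinuousMap ψ).comp
        ((WeakDual.CharacterSpace.homeoEval B ℂ) : C(B, WeakDual.characterSpace ℂ C(B, ℂ))))) with hk
  have key : ∀ (b : B) (φ : C(X, ℂ)), φ (k b) = ψ φ b := by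
    intro b φ
    have h1 := (WeakDual.CharacterSpace.homeoEval X ℂ).apply_symm_apply
      ((WeakDual.CharacterSpace.compContinuousMap ψ)
        (WeakDual.CharacterSpace.homeoEval B ℂ b))
    calc φ (k b) = ((WeakDual.CharacterSpace.homeoEval X ℂ)
          ((WeakDual.CharacterSpace.homeoEval X ℂ).symm
            ((WeakDual.CharacterSpace.compContinuousMap ψ)
              (WeakDual.CharacterSpace.homeoEval B ℂ b)))) φ := rfl
      _ = ((WeakDual.CharacterSpace.compContinuousMap ψ)
            (WeakDual.CharacterSpace.homeoEval B ℂ b)) φ := by rw [h1]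
      _ = ψ φ b := rfl
  refine ⟨k, ?_, ?_⟩
  · intro a
    apply (WeakDual.CharacterSpace.homeoEval X ℂ).injective
    refine WeakDual.CharacterSpace.ext fun φ => ?_
    have h2 : ψ φ (a : B) = φ (g a) := by
      have := congrFun (congrArg (fun t => DFunLike.coe (DFunLike.coe t φ)) hψ2) a
      simpa [hp, hι] using this
    show φ (k (a : B)) = φ (g a)
    rw [key]; exact h2
  · intro b
    apply (WeakDual.CharacterSpace.homeoEval Y ℂ).injective
    refine WeakDual.CharacterSpace.ext fun φ => ?_
    have h2 : ψ (φ.comp f) b = φ (h b) := by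
      have := congrFun (congrArg (fun t => DFunLike.coe (DFunLike.coe t φ)) hψ1) b
      simpa using this
    show φ (f (k b)) = φ (h b)
    rw [show φ (f (k b)) = (φ.comp f) (k b) from rfl, key]; exact h2
end

section
/- Main theorem: Let f : X → Y be a surjective continuous map of a compact Hausdorff space X onto a Peano continuum Y with more than one point. If C(f) : C(Y) → C(X) is doubly projective in the category of unital C*-algebras, then f is a homeomorphism. -/
set_option synthInstance.maxHeartbeats 1000000
set_option maxHeartbeats 1000000

/-!
Auxiliary material for the main theorem.

Strategy: if `f x1 = f x2 =: y0` with `x1 ≠ x2`, instantiate double projectivity of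
`C(f)` at the square with `A = C(Y, B(ℂ²))`, `B = B(ℂ²)`, `p` = evaluation at `y0`,
`f̃ : χ ↦ (y ↦ diag (χ y, χ y0))` and `g : ψ ↦` Hadamard conjugate of `diag (ψ x1, ψ x2)`.
Any diagonal `h` must take diagonal-matrix values at every `y ≠ y0` (it commutes with the
image of `f̃`, which separates `y` from `y0`), hence by continuity also at `y0` (`y0` is not
isolated since `Y` is connected and nontrivial); but `p ∘ h = g` forces a nonzero off-diagonal
value at `y0`, a contradiction.  Hence `f` is injective, and a continuous bijection from a
compact space to a Hausdorff space is a homeomorphism.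
-/

namespace DPAux

noncomputable section

abbrev E2 : Type := EuclideanSpace ℂ (Fin 2)
abbrev V : Type := E2 →L[ℂ] E2
abbrev MM : Type := Matrix (Fin 2) (Fin 2) ℂ
abbrev Phi : MM ≃⋆ₐ[ℂ] V := Matrix.toEuclideanCLM

/-- `Matrix.diagonal` as a star algebra homomorphism. -/
def diagHom : (Fin 2 → ℂ) →⋆ₐ[ℂ] MM where
  toFun d := Matrix.diagonal d
  map_one' := Matrix.diagonal_one
  map_mul' a b := (Matrix.diagonal_mul_diagonal a b).symm
  map_zero' := Matrix.diagonal_zero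
  map_add' a b := (Matrix.diagonal_add a b).symm
  commutes' r := (Matrix.algebraMap_eq_diagonal r).symm
  map_star' d := by
    simp [Matrix.star_eq_conjTranspose, Matrix.diagonal_conjTranspose]

/-- Diagonal matrices, realized inside `V`. -/
def PsiV : (Fin 2 → ℂ) →⋆ₐ[ℂ] V :=
  (StarAlgHomClass.toStarAlgHom (Phi : MM ≃⋆ₐ[ℂ] V)).comp diagHom

lemma PsiV_apply (d : Fin 2 → ℂ) : PsiV d = Phi (Matrix.diagonal d) := rfl

lemma continuous_PsiV : Continuous (PsiV : (Fin 2 → ℂ) → V) :=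
  LinearMap.continuous_of_finiteDimensional (PsiV.toAlgHom.toLinearMap)

/-- Entry extraction formula for `Phi.symm`. -/
lemma entry_eq (v : V) (i j : Fin 2) :
    (Phi.symm v) i j =
      WithLp.equiv 2 (Fin 2 → ℂ) (v ((WithLp.equiv 2 (Fin 2 → ℂ)).symm (Pi.single j 1))) i := by
  have h := Matrix.toEuclideanCLM_toLp (𝕜 := ℂ) (Phi.symm v) (Pi.single j 1)
  rw [StarAlgEquiv.apply_symm_apply] at h
  show Phi.symm v i j = WithLp.ofLp (v (WithLp.toLp 2 (Pi.single j 1))) i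
  rw [h]
  simp [Matrix.toLin'_apply]

lemma continuous_entry (i j : Fin 2) : Continuous fun v : V => (Phi.symm v) i j := by
  simp only [entry_eq]
  have h1 : Continuous (WithLp.equiv 2 (Fin 2 → ℂ)) := PiLp.continuous_ofLp 2 _
  exact ((continuous_apply i).comp h1).comp (continuous_id.clm_apply continuous_const)

/-- Evaluation at a pair of points, as a star algebra homomorphism. -/
def pairEval {Z : Type} [TopologicalSpace Z] (z0 z1 : Z) :
    C(Z, ℂ) →⋆ₐ[ℂ] (Fin 2 → ℂ) where
  toFun ψ := ![ψ z0, ψ z1]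
  map_one' := by funext i; fin_cases i <;> simp
  map_mul' ψ φ := by funext i; fin_cases i <;> simp
  map_zero' := by funext i; fin_cases i <;> simp
  map_add' ψ φ := by funext i; fin_cases i <;> simp
  commutes' r := by funext i; fin_cases i <;> simp [Algebra.algebraMap_eq_smul_one]
  map_star' ψ := by funext i; fin_cases i <;> simp

lemma pairEval_apply {Z : Type} [TopologicalSpace Z] (z0 z1 : Z) (ψ : C(Z, ℂ)) :
    pairEval z0 z1 ψ = ![ψ z0, ψ z1] := rfl

def H : MM := !![1, 1; 1, -1]

lemma H_mul_H : H * H = (2 : ℂ) • 1 := by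
  ext i j
  fin_cases i <;> fin_cases j <;>
    simp [H, Matrix.mul_apply, Fin.sum_univ_two, Matrix.one_apply] <;> norm_num

lemma H_star : star H = H := by
  ext i j
  fin_cases i <;> fin_cases j <;>
    simp [H, Matrix.star_eq_conjTranspose, Matrix.conjTranspose_apply]

/-- Conjugation by the (normalized) Hadamard matrix, as a star algebra homomorphism. -/
def hconj : MM →⋆ₐ[ℂ] MM where
  toFun a := (2 : ℂ)⁻¹ • (H * a * H)
  map_one' := by
    show (2 : ℂ)⁻¹ • (H * 1 * H) = 1
    rw [mul_one, H_mul_H, smul_smul]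
    norm_num
  map_mul' a b := by
    have e : (H * a * H) * (H * b * H) = H * a * ((H * H) * (b * H)) := by
      simp only [mul_assoc]
    have h1 : (H * a * H) * (H * b * H) = (2 : ℂ) • (H * (a * b) * H) := by
      rw [e, H_mul_H, smul_mul_assoc, one_mul, mul_smul_comm]
      simp only [mul_assoc]
    show (2 : ℂ)⁻¹ • (H * (a * b) * H) =
      ((2 : ℂ)⁻¹ • (H * a * H)) * ((2 : ℂ)⁻¹ • (H * b * H))
    rw [smul_mul_smul_comm, h1, smul_smul]
    norm_num
  map_zero' := by simp
  map_add' a b := by simp [mul_add, add_mul, smul_add]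
  commutes' r := by
    simp only [Algebra.algebraMap_eq_smul_one]
    rw [mul_smul_comm, mul_one, smul_mul_assoc, H_mul_H, smul_smul, smul_smul]
    congr 1
    ring
  map_star' a := by
    simp only [star_smul, star_mul, H_star, star_inv₀]
    rw [show star (2 : ℂ) = 2 by simp]
    simp only [mul_assoc]

lemma hconj_apply (a : MM) : hconj a = (2 : ℂ)⁻¹ • (H * a * H) := rfl

lemma hconj_diag_const (c : ℂ) :
    hconj (Matrix.diagonal ![c, c]) = Matrix.diagonal ![c, c] := by
  have hd : Matrix.diagonal ![c, c] = c • (1 : MM) := by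
    ext i j
    fin_cases i <;> fin_cases j <;> simp [Matrix.one_apply]
  rw [hd, map_smul, map_one]

lemma hconj_entry01 : (hconj (Matrix.diagonal ![(0 : ℂ), 1])) 0 1 = -(2 : ℂ)⁻¹ := by
  show ((2 : ℂ)⁻¹ • (H * Matrix.diagonal ![(0 : ℂ), 1] * H)) 0 1 = -(2 : ℂ)⁻¹
  simp [H, Matrix.mul_apply, Fin.sum_univ_two, Matrix.smul_apply, Matrix.diagonal_apply,
    Matrix.vecMul, dotProduct]

noncomputable instance : ContinuousStar V := @NormedStarGroup.to_continuousStar V _ _ _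

/-- The coordinate pair map `χ ↦ (y ↦ (χ y, χ y0))`. -/
def pairMap {Y : Type} [TopologicalSpace Y] (y0 : Y) :
    C(Y, ℂ) →⋆ₐ[ℂ] C(Y, Fin 2 → ℂ) where
  toFun χ := ⟨fun y => ![χ y, χ y0], by
    refine continuous_pi fun i => ?_
    fin_cases i
    · simpa using χ.continuous
    · simpa using (continuous_const : Continuous fun _ : Y => χ y0)⟩
  map_one' := by
    apply ContinuousMap.ext; intro y; funext i
    fin_cases i <;> simp
  map_mul' χ φ := by
    apply ContinuousMap.ext; intro y; funext i
    fin_cases i <;> simp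
  map_zero' := by
    apply ContinuousMap.ext; intro y; funext i
    fin_cases i <;> simp
  map_add' χ φ := by
    apply ContinuousMap.ext; intro y; funext i
    fin_cases i <;> simp
  commutes' r := by
    apply ContinuousMap.ext; intro y; funext i
    fin_cases i <;> simp [Algebra.algebraMap_eq_smul_one]
  map_star' χ := by
    apply ContinuousMap.ext; intro y; funext i
    fin_cases i <;> simp

/-- The homomorphism `f̃ : C(Y) → C(Y, V)`, `χ ↦ (y ↦ diag (χ y, χ y0))`. -/
def fTilde {Y : Type} [TopologicalSpace Y] [CompactSpace Y] (y0 : Y) :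
    C(Y, ℂ) →⋆ₐ[ℂ] C(Y, V) :=
  (ContinuousMap.compStarAlgHom Y PsiV continuous_PsiV).comp (pairMap y0)

lemma fTilde_apply {Y : Type} [TopologicalSpace Y] [CompactSpace Y] (y0 : Y)
    (χ : C(Y, ℂ)) (y : Y) : fTilde y0 χ y = Phi (Matrix.diagonal ![χ y, χ y0]) := by
  show PsiV ![χ y, χ y0] = _
  rw [PsiV_apply]

/-- Evaluation at a point, as a star algebra homomorphism `C(Y, V) → V`. -/
def evalHom {Y : Type} [TopologicalSpace Y] [CompactSpace Y] (y0 : Y) :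
    C(Y, V) →⋆ₐ[ℂ] V where
  toFun F := F y0
  map_one' := rfl
  map_mul' _ _ := rfl
  map_zero' := rfl
  map_add' _ _ := rfl
  commutes' _ := rfl
  map_star' _ := rfl

lemma evalHom_apply {Y : Type} [TopologicalSpace Y] [CompactSpace Y] (y0 : Y)
    (F : C(Y, V)) : evalHom y0 F = F y0 := rfl

lemma evalHom_surjective {Y : Type} [TopologicalSpace Y] [CompactSpace Y] (y0 : Y) :
    Function.Surjective (evalHom y0) :=
  fun v => ⟨ContinuousMap.const Y v, rfl⟩

/-- The homomorphism `g : C(X) → V`. -/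
def gHom {X : Type} [TopologicalSpace X] (x1 x2 : X) : C(X, ℂ) →⋆ₐ[ℂ] V :=
  ((StarAlgHomClass.toStarAlgHom (Phi : MM ≃⋆ₐ[ℂ] V)).comp hconj).comp
    (diagHom.comp (pairEval x1 x2))

lemma gHom_apply {X : Type} [TopologicalSpace X] (x1 x2 : X) (ψ : C(X, ℂ)) :
    gHom x1 x2 ψ = Phi (hconj (Matrix.diagonal ![ψ x1, ψ x2])) := rfl

end

end DPAux

/-- Doubly projective unital `*`-homomorphism of unital C*-algebras. -/
def DoublyProjective {X Y : Type} [CStarAlgebra X] [CStarAlgebra Y]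
    (i : X →⋆ₐ[ℂ] Y) : Prop :=
  ∀ (A B : Type) [CStarAlgebra A] [CStarAlgebra B]
    (f : X →⋆ₐ[ℂ] A) (g : Y →⋆ₐ[ℂ] B) (p : A →⋆ₐ[ℂ] B),
    Function.Surjective p → g.comp i = p.comp f →
      ∃ h : Y →⋆ₐ[ℂ] A, h.comp i = f ∧ p.comp h = g

/-- Main theorem: a surjective map of a compact Hausdorff space onto a nondegenerate Peano
continuum whose induced homomorphism `C(f) : C(Y) → C(X)` is doubly projective in the category
of unital C*-algebras is a homeomorphism. -/
theorem main_theorem {X Y : Type}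
    [TopologicalSpace X] [CompactSpace X] [T2Space X]
    [TopologicalSpace Y] [CompactSpace Y] [T2Space Y]
    [TopologicalSpace.MetrizableSpace Y] [ConnectedSpace Y] [LocallyConnectedSpace Y]
    [Nontrivial Y]
    (f : C(X, Y)) (hsurj : Function.Surjective f)
    (hdp : DoublyProjective (ContinuousMap.compStarAlgHom' ℂ ℂ f)) :
    IsHomeomorph f := by
  rw [isHomeomorph_iff_continuous_bijective]
  refine ⟨f.continuous, ?_, hsurj⟩
  intro x1 x2 hxx
  by_contra hne
  set y0 : Y := f x1 with hy0
  -- the noncommutative square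
  obtain ⟨h, h1, h2⟩ := hdp (C(Y, DPAux.V)) DPAux.V
    (DPAux.fTilde y0) (DPAux.gHom x1 x2) (DPAux.evalHom y0)
    (DPAux.evalHom_surjective y0) (by
      apply StarAlgHom.ext
      intro χ
      show DPAux.gHom x1 x2 (χ.comp f) = DPAux.evalHom y0 (DPAux.fTilde y0 χ)
      have e1 : (χ.comp f) x1 = χ y0 := rfl
      have e2 : (χ.comp f) x2 = χ y0 := by
        simp only [ContinuousMap.comp_apply, ← hxx, hy0]
      rw [DPAux.gHom_apply, DPAux.evalHom_apply, DPAux.fTilde_apply, e1, e2,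
        DPAux.hconj_diag_const])
  -- a function separating x1 and x2
  obtain ⟨ψR, hp0, hp1, -⟩ := exists_continuous_zero_one_of_isClosed
    (isClosed_singleton (x := x1)) (isClosed_singleton (x := x2))
    (Set.disjoint_singleton.mpr hne)
  set ψ0 : C(X, ℂ) := (⟨Complex.ofReal, Complex.continuous_ofReal⟩ : C(ℝ, ℂ)).comp ψR with hψ0
  have hψ1 : ψ0 x1 = 0 := by
    simp [hψ0, hp0 (Set.mem_singleton x1)]
  have hψ2 : ψ0 x2 = 1 := by
    simp [hψ0, hp1 (Set.mem_singleton x2)]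
  -- the matrix-valued function
  set m : Y → DPAux.MM := fun y => DPAux.Phi.symm ((h ψ0) y) with hm
  -- off-diagonal entries vanish away from y0
  have key : ∀ y : Y, y ≠ y0 → m y 0 1 = 0 := by
    intro y hy
    obtain ⟨χR, hχ0, hχ1, -⟩ := exists_continuous_zero_one_of_isClosed
      (isClosed_singleton (x := y)) (isClosed_singleton (x := y0))
      (Set.disjoint_singleton.mpr hy)
    set χ : C(Y, ℂ) := (⟨Complex.ofReal, Complex.continuous_ofReal⟩ : C(ℝ, ℂ)).comp χR with hχ
    have hχy : χ y = 0 := by simp [hχ, hχ0 (Set.mem_singleton y)]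
    have hχy0 : χ y0 = 1 := by simp [hχ, hχ1 (Set.mem_singleton y0)]
    have hiχ : h ((ContinuousMap.compStarAlgHom' ℂ ℂ f) χ) = DPAux.fTilde y0 χ :=
      DFunLike.congr_fun h1 χ
    have hcom : h ψ0 * (DPAux.fTilde y0 χ) = (DPAux.fTilde y0 χ) * h ψ0 := by
      rw [← hiχ, ← map_mul, ← map_mul, mul_comm]
    have hy' : (h ψ0) y * (DPAux.fTilde y0 χ) y = (DPAux.fTilde y0 χ) y * (h ψ0) y := by
      have := DFunLike.congr_fun hcom y
      simpa using this
    have hmateq : m y * Matrix.diagonal ![χ y, χ y0] = Matrix.diagonal ![χ y, χ y0] * m y := by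
      have := congrArg DPAux.Phi.symm hy'
      simpa [map_mul, DPAux.fTilde_apply, StarAlgEquiv.symm_apply_apply, hm] using this
    have hent := congrArg (fun M : DPAux.MM => M 0 1) hmateq
    simp only [Matrix.mul_diagonal, Matrix.diagonal_mul] at hent
    rw [hχy, hχy0] at hent
    simpa using hent
  -- continuity of the off-diagonal entry
  have hcont : Continuous fun y : Y => m y 0 1 :=
    (DPAux.continuous_entry 0 1).comp (h ψ0).continuous
  -- {y0} is not open
  have hnotopen : ¬ IsOpen ({y0} : Set Y) := by
    intro hop
    rcases isClopen_iff.mp ⟨isClosed_singleton, hop⟩ with hemp | huniv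
    · exact (Set.singleton_ne_empty y0) hemp
    · obtain ⟨b, hb⟩ := exists_ne y0
      exact hb (by rw [← Set.mem_singleton_iff, huniv]; trivial)
  have hdense : Dense ({y0}ᶜ : Set Y) := dense_compl_singleton_iff_not_open.mpr hnotopen
  have hall : m y0 0 1 = 0 := by
    have hcl : IsClosed {y : Y | m y 0 1 = 0} := isClosed_eq hcont continuous_const
    have hsub : (Set.univ : Set Y) ⊆ {y : Y | m y 0 1 = 0} := by
      rw [← hdense.closure_eq]
      exact closure_minimal (fun z hz => key z hz) hcl
    exact hsub (Set.mem_univ y0)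
  -- but the value at y0 is off-diagonal
  have hval : (h ψ0) y0 = DPAux.gHom x1 x2 ψ0 := by
    have := DFunLike.congr_fun h2 ψ0
    simpa [DPAux.evalHom_apply] using this
  have hfinal : m y0 0 1 = -(2 : ℂ)⁻¹ := by
    rw [hm]
    simp only [hval, DPAux.gHom_apply, StarAlgEquiv.symm_apply_apply]
    rw [hψ1, hψ2]
    exact DPAux.hconj_entry01
  rw [hall] at hfinal
  norm_num at hfinal
end
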